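/- Let G be a simplicial group. For x, y ∈ NG₁ = ker d₀ ⊆ G₁ define the Peiffer lifting {x,y} = [s₀x, s₁y]·[s₁y, s₁x] ∈ G₂. Then d₀{x,y} = d₁{x,y} = 1 and d₂{x,y} = ⟨x,y⟩, where ⟨x,y⟩ = x y x⁻¹ (s₀(d₁ x) y s₀(d₁ x)⁻¹)⁻¹ is the Peiffer commutator. Consequently every Peiffer commutator lies in d₂(NG₂). -/

import Mathlib

open CategoryTheory Simplicial
open scoped commutatorElement

section helpers
variable (X : SimplicialObject GrpCat)

private lemma d0s1 (a : X _⦋1⦌) : X.δ (n := 1) 0 (X.σ (n := 1) 1 a)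
    = X.σ (n := 0) 0 (X.δ (n := 0) 0 a) := by
  have h := X.δ_comp_σ_of_le (n := 0) (i := 0) (j := 0) (by decide)
  have h2 := ConcreteCategory.congr_hom h a
  simpa only [comp_apply, Fin.castSucc_zero, Fin.succ_zero_eq_one, Fin.succ_one_eq_two] using h2

private lemma d0s0 (a : X _⦋1⦌) : X.δ (n := 1) 0 (X.σ (n := 1) 0 a) = a := by
  have h := X.δ_comp_σ_self' (n := 1) (i := 0) (j := 0) (by decide)
  have h2 := ConcreteCategory.congr_hom h a
  simpa only [comp_apply, id_apply] using h2

private lemma d1s0 (a : X _⦋1⦌) : X.δ (n := 1) 1 (X.σ (n := 1) 0 a) = a := by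
  have h := X.δ_comp_σ_succ' (n := 1) (i := 0) (j := 1) (by decide)
  have h2 := ConcreteCategory.congr_hom h a
  simpa only [comp_apply, id_apply] using h2

private lemma d1s1 (a : X _⦋1⦌) : X.δ (n := 1) 1 (X.σ (n := 1) 1 a) = a := by
  have h := X.δ_comp_σ_self' (n := 1) (i := 1) (j := 1) (by decide)
  have h2 := ConcreteCategory.congr_hom h a
  simpa only [comp_apply, id_apply] using h2

private lemma d2s1 (a : X _⦋1⦌) : X.δ (n := 1) 2 (X.σ (n := 1) 1 a) = a := by
  have h := X.δ_comp_σ_succ' (n := 1) (i := 1) (j := 2) (by decide)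
  have h2 := ConcreteCategory.congr_hom h a
  simpa only [comp_apply, id_apply] using h2

private lemma d2s0 (a : X _⦋1⦌) : X.δ (n := 1) 2 (X.σ (n := 1) 0 a)
    = X.σ (n := 0) 0 (X.δ (n := 0) 1 a) := by
  have h := X.δ_comp_σ_of_gt (n := 0) (i := 1) (j := 0) (by decide)
  have h2 := ConcreteCategory.congr_hom h a
  simpa only [comp_apply, Fin.castSucc_zero, Fin.succ_zero_eq_one, Fin.succ_one_eq_two] using h2

end helpers

/-- Peiffer lifting.  Let `X` be a simplicial group and `x, y ∈ NG₁ = ker d₀`.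
The Peiffer lifting `{x,y} = [s₁x, s₁y]·[s₁y, s₀x] ∈ X₂` (with commutator
convention `⁅a,b⁆ = a b a⁻¹ b⁻¹`; this is the inverse of `[s₀x,s₁y][s₁y,s₁x]`)
satisfies `d₀{x,y} = d₁{x,y} = 1` and `d₂{x,y} = ⟨x,y⟩`, where
`⟨x,y⟩ = x y x⁻¹ (s₀(d₁x) y s₀(d₁x)⁻¹)⁻¹` is the Peiffer commutator.
Consequently every Peiffer commutator lies in `d₂(NG₂)`. -/
theorem stmt12 (X : SimplicialObject GrpCat)
    (x y : X _⦋1⦌) (hx : X.δ (n := 0) 0 x = 1) (hy : X.δ (n := 0) 0 y = 1) :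
    (X.δ (n := 1) 0 (⁅X.σ (n := 1) 1 x, X.σ (n := 1) 1 y⁆ *
        ⁅X.σ (n := 1) 1 y, X.σ (n := 1) 0 x⁆) = 1 ∧
      X.δ (n := 1) 1 (⁅X.σ (n := 1) 1 x, X.σ (n := 1) 1 y⁆ *
        ⁅X.σ (n := 1) 1 y, X.σ (n := 1) 0 x⁆) = 1 ∧
      X.δ (n := 1) 2 (⁅X.σ (n := 1) 1 x, X.σ (n := 1) 1 y⁆ *
        ⁅X.σ (n := 1) 1 y, X.σ (n := 1) 0 x⁆)
        = x * y * x⁻¹ *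
            (X.σ (n := 0) 0 (X.δ (n := 0) 1 x) * y *
              (X.σ (n := 0) 0 (X.δ (n := 0) 1 x))⁻¹)⁻¹) ∧
    (∃ z : X _⦋2⦌, X.δ (n := 1) 0 z = 1 ∧ X.δ (n := 1) 1 z = 1 ∧
      X.δ (n := 1) 2 z
        = x * y * x⁻¹ *
            (X.σ (n := 0) 0 (X.δ (n := 0) 1 x) * y *
              (X.σ (n := 0) 0 (X.δ (n := 0) 1 x))⁻¹)⁻¹) := by
  have h0 : X.δ (n := 1) 0 (⁅X.σ (n := 1) 1 x, X.σ (n := 1) 1 y⁆ *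
      ⁅X.σ (n := 1) 1 y, X.σ (n := 1) 0 x⁆) = 1 := by
    simp [commutatorElement_def, map_mul, map_inv, d0s1, d0s0, hx, hy]
  have h1 : X.δ (n := 1) 1 (⁅X.σ (n := 1) 1 x, X.σ (n := 1) 1 y⁆ *
      ⁅X.σ (n := 1) 1 y, X.σ (n := 1) 0 x⁆) = 1 := by
    simp only [commutatorElement_def, map_mul, map_inv, d1s1, d1s0]
    group
  have h2 : X.δ (n := 1) 2 (⁅X.σ (n := 1) 1 x, X.σ (n := 1) 1 y⁆ *
      ⁅X.σ (n := 1) 1 y, X.σ (n := 1) 0 x⁆)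
      = x * y * x⁻¹ * (X.σ (n := 0) 0 (X.δ (n := 0) 1 x) * y *
          (X.σ (n := 0) 0 (X.δ (n := 0) 1 x))⁻¹)⁻¹ := by
    simp only [commutatorElement_def, map_mul, map_inv, d2s1, d2s0]
    group
  exact ⟨⟨h0, h1, h2⟩, _, h0, h1, h2⟩
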